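/- Let R be a UFD and I an ideal with R/I ≅ 𝔽₄. Then every τ_I-atomic element w of R has τ_I-elasticity ρ_I(w) = 1; in particular R is a τ_I-half factorial domain. -/

import Mathlib

open Polynomial
open scoped ENNReal

variable {R : Type*} [CommRing R]

/-- `a = λ b₁ ⋯ b_k` with `λ` a unit, `k ≥ 1`, and all `bᵢ` pairwise congruent mod `I`. -/
def IsTauFactorization (I : Ideal R) (a : R) (L : List R) : Prop :=
  L ≠ [] ∧ (∃ u : R, IsUnit u ∧ a = u * L.prod) ∧
    ∀ b ∈ L, ∀ c ∈ L, Ideal.Quotient.mk I b = Ideal.Quotient.mk I c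

/-- A `τ_I`-atom: a nonzero nonunit whose only `τ_I`-factorizations have length one. -/
def IsTauAtom (I : Ideal R) (a : R) : Prop :=
  a ≠ 0 ∧ ¬ IsUnit a ∧ ∀ L : List R, IsTauFactorization I a L → L.length = 1

/-- A `τ_I`-factorization into `τ_I`-atoms. -/
def IsTauAtomicFactorization (I : Ideal R) (a : R) (L : List R) : Prop :=
  IsTauFactorization I a L ∧ ∀ b ∈ L, IsTauAtom I b

/-- An element is `τ_I`-atomic if it has a `τ_I`-factorization into `τ_I`-atoms. -/
def IsTauAtomic (I : Ideal R) (a : R) : Prop :=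
  ∃ L : List R, IsTauAtomicFactorization I a L

/-- The `τ_I`-elasticity of an element: `sup{k/l}` over pairs of atomic `τ_I`-factorizations. -/
noncomputable def tauElasticity (I : Ideal R) (a : R) : ℝ≥0∞ :=
  sSup {r : ℝ≥0∞ | ∃ L₁ L₂ : List R, IsTauAtomicFactorization I a L₁ ∧
    IsTauAtomicFactorization I a L₂ ∧
    r = (L₁.length : ℝ≥0∞) / (L₂.length : ℝ≥0∞)}

/-- The `τ_I`-elasticity of the ring: the supremum over `τ_I`-atomic elements. -/
noncomputable def tauRingElasticity (I : Ideal R) : ℝ≥0∞ :=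
  ⨆ a ∈ {a : R | IsTauAtomic I a}, tauElasticity I a


section Aux
noncomputable abbrev Ffour := GaloisField 2 2

lemma Ffour_exists_omega : ∃ ω : Ffour, ω ≠ 0 ∧ ω ≠ 1 ∧ ω^2 + ω + 1 = 0 := by
  letI : Fintype Ffour := Fintype.ofFinite _
  have hcard : Fintype.card Ffour = 4 := by
    have := GaloisField.card 2 2 (by norm_num)
    rwa [Nat.card_eq_fintype_card] at this
  have hpow : ∀ x : Ffour, x ^ 4 = x := by
    intro x
    have := FiniteField.pow_card x
    rwa [hcard] at this
  have : ∃ x : Ffour, x ≠ 0 ∧ x ≠ 1 := by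
    by_contra h
    push_neg at h
    have hsurj : Function.Surjective (fun b : Bool => if b then (1:Ffour) else 0) := by
      intro x
      rcases em (x = 0) with rfl | hx
      · exact ⟨false, rfl⟩
      · exact ⟨true, (h x hx).symm⟩
    have := Nat.card_le_card_of_surjective _ hsurj
    simp [Nat.card_eq_fintype_card, hcard] at this
  obtain ⟨x, hx0, hx1⟩ := this
  refine ⟨x, hx0, hx1, ?_⟩
  have h3 : x ^ 3 = 1 := by
    have h4 := hpow x
    have : x * x ^ 3 = x * 1 := by ring_nf; linear_combination h4
    exact mul_left_cancel₀ hx0 this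
  have : (x - 1) * (x^2 + x + 1) = 0 := by linear_combination h3
  rcases mul_eq_zero.mp this with h | h
  · exact absurd (sub_eq_zero.mp h) hx1
  · exact h




abbrev Qring := ℤ[X] ⧸ Ideal.span ({2, X ^ 2 + X + 1} : Set ℤ[X])

lemma Qring_facts : ∃ φ : Qring →+* Ffour, Function.Injective φ := by
  obtain ⟨ω, hω0, hω1, hω⟩ := Ffour_exists_omega
  set g : ℤ[X] := X ^ 2 + X + 1 with hg
  have hgmonic : g.Monic := by
    rw [hg, show (X^2+X+1 : ℤ[X]) = X^2 + (X+1) by ring]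
    apply monic_X_pow_add (p := X + 1)
    have h1 : degree ((X:ℤ[X]) + 1) ≤ 1 := by
      simpa using degree_linear_le (a := (1:ℤ)) (b := 1)
    exact lt_of_le_of_lt h1 (by norm_num)
  set φ0 : ℤ[X] →+* Ffour := eval₂RingHom (Int.castRingHom Ffour) ω with hφ0
  have hker : ∀ p : ℤ[X], φ0 p = 0 → p ∈ Ideal.span ({2, g} : Set ℤ[X]) := by
    intro p hp
    have h2mem : (2 : ℤ[X]) ∈ Ideal.span ({2, g} : Set ℤ[X]) :=
      Ideal.subset_span (by simp)
    have hgmem : g ∈ Ideal.span ({2, g} : Set ℤ[X]) :=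
      Ideal.subset_span (by simp)
    have hdecomp := modByMonic_add_div p g
    set r := p %ₘ g with hr
    have hφg : φ0 g = 0 := by
      simp [hφ0, hg, coe_eval₂RingHom]
      linear_combination hω
    have hφr : φ0 r = 0 := by
      have : φ0 (r + g * (p /ₘ g)) = 0 := by rw [hdecomp]; exact hp
      rw [map_add, map_mul, hφg, zero_mul, add_zero] at this
      exact this
    have hdeg : r.degree ≤ 1 := by
      have := degree_modByMonic_lt p hgmonic
      have hdg : g.degree = 2 := by
        rw [hg]; compute_degree!
      rw [hdg] at this
      exact Order.le_of_lt_succ (by exact_mod_cast this)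
    have hre := eq_X_add_C_of_degree_le_one hdeg
    set a := r.coeff 1 with ha
    set b := r.coeff 0 with hb
    have heval : (a : Ffour) * ω + (b : Ffour) = 0 := by
      have := hφr
      rw [hre] at this
      simpa [hφ0, coe_eval₂RingHom, map_intCast, map_add, map_mul] using this
    -- integer casts to Ffour are 0 or 1 according to parity
    have hcast : ∀ n : ℤ, ¬ (2 ∣ n) → (n : Ffour) = 1 := by
      intro n hn
      obtain ⟨k, hk⟩ : ∃ k, n = 2*k + 1 := ⟨n / 2, by omega⟩
      have h2 : (2 : Ffour) = 0 := by
        have : ((2:ℤ) : Ffour) = 0 := (CharP.intCast_eq_zero_iff Ffour 2 2).mpr ⟨1, by ring⟩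
        simpa using this
      rw [hk]; push_cast; rw [h2]; ring
    have hda : (2:ℤ) ∣ a := by
      by_contra hna
      have h1 : (a : Ffour) = 1 := hcast a hna
      rw [h1, one_mul] at heval
      rcases em ((2:ℤ) ∣ b) with hdb | hdb
      · have : (b : Ffour) = 0 := (CharP.intCast_eq_zero_iff Ffour 2 b).mpr (by exact_mod_cast hdb)
        rw [this, add_zero] at heval
        exact hω0 heval
      · have : (b : Ffour) = 1 := hcast b hdb
        rw [this] at heval
        apply hω1
        have h2 : (2 : Ffour) = 0 := by
          have : ((2:ℤ) : Ffour) = 0 := (CharP.intCast_eq_zero_iff Ffour 2 2).mpr ⟨1, by ring⟩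
          simpa using this
        linear_combination heval - h2
    have hdb : (2:ℤ) ∣ b := by
      obtain ⟨a', ha'⟩ := hda
      rw [ha'] at heval
      have h0 : (((2:ℤ) * a' : ℤ) : Ffour) = 0 :=
        (CharP.intCast_eq_zero_iff Ffour 2 _).mpr ⟨a', by push_cast; ring⟩
      rw [h0, zero_mul, zero_add] at heval
      exact_mod_cast (CharP.intCast_eq_zero_iff Ffour 2 b).mp heval
    have hrmem : r ∈ Ideal.span ({2, g} : Set ℤ[X]) := by
      obtain ⟨a', ha'⟩ := hda
      obtain ⟨b', hb'⟩ := hdb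
      have : r = 2 * (C a' * X + C b') := by
        rw [hre, ha', hb']; simp only [map_mul, map_ofNat]; ring
      rw [this]
      exact Ideal.mul_mem_right _ _ h2mem
    have : p = r + g * (p /ₘ g) := hdecomp.symm
    rw [this]
    exact Ideal.add_mem _ hrmem (Ideal.mul_mem_right _ _ hgmem)
  have hφ2 : φ0 (2 : ℤ[X]) = 0 := by
    have : ((2:ℤ) : Ffour) = 0 := (CharP.intCast_eq_zero_iff Ffour 2 2).mpr ⟨1, by ring⟩
    simpa [map_ofNat] using this
  have hφg : φ0 g = 0 := by
    simp [hφ0, hg, coe_eval₂RingHom]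
    linear_combination hω
  have hsub : ∀ a : ℤ[X], a ∈ Ideal.span ({2, g} : Set ℤ[X]) → φ0 a = 0 := by
    have : Ideal.span ({2, g} : Set ℤ[X]) ≤ RingHom.ker φ0 := by
      rw [Ideal.span_le]
      rintro x (rfl | rfl)
      · exact hφ2
      · exact hφg
    exact fun a ha => this ha
  refine ⟨Ideal.Quotient.lift _ φ0 hsub, ?_⟩
  rw [injective_iff_map_eq_zero]
  intro x hx
  obtain ⟨p, rfl⟩ := Ideal.Quotient.mk_surjective x
  rw [Ideal.Quotient.lift_mk] at hx
  exact (Ideal.Quotient.eq_zero_iff_mem).mpr (hker p hx)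


lemma Ffour_pow4 : ∀ x : Ffour, x ^ 4 = x := by
  letI : Fintype Ffour := Fintype.ofFinite _
  have hcard : Fintype.card Ffour = 4 := by
    have := GaloisField.card 2 2 (by norm_num)
    rwa [Nat.card_eq_fintype_card] at this
  intro x
  have := FiniteField.pow_card x
  rwa [hcard] at this

end Aux

lemma pair_fact (I : Ideal R) {a u c d : R} (hu : IsUnit u)
    (h : a = u * (c * d)) (hcd : Ideal.Quotient.mk I c = Ideal.Quotient.mk I d) :
    IsTauFactorization I a [c, d] := by
  refine ⟨by simp, ⟨u, hu, by simpa [mul_assoc] using h⟩, ?_⟩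
  intro x hx y hy
  simp only [List.mem_cons, List.not_mem_nil, or_false] at hx hy
  rcases hx with rfl | rfl <;> rcases hy with rfl | rfl <;> simp [hcd]

lemma atom_no_pair {I : Ideal R} {a : R} (ha : IsTauAtom I a) {u c d : R} (hu : IsUnit u)
    (h : a = u * (c * d)) (hcd : Ideal.Quotient.mk I c = Ideal.Quotient.mk I d) : False := by
  have := ha.2.2 _ (pair_fact I hu h hcd)
  simp at this

lemma key3 {K : Type*} [CommRing K]
    (hdom : ∀ x y : K, x * y = 0 → x = 0 ∨ y = 0)
    (hK4 : ∀ x : K, x ^ 4 = x) {x y z : K}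
    (hx0 : x ≠ 0) (hx1 : x ≠ 1) (hy0 : y ≠ 0) (hy1 : y ≠ 1)
    (hz0 : z ≠ 0) (hz1 : z ≠ 1)
    (h1 : z ≠ x ^ 2) (h2 : z ≠ y ^ 2) (h3 : z ≠ x ^ 2 * y ^ 2) : False := by
  have cube : ∀ w : K, w ≠ 0 → w ^ 3 = 1 := by
    intro w hw
    have h4 := hK4 w
    have : w * (w ^ 3 - 1) = 0 := by linear_combination h4
    rcases hdom _ _ this with h | h
    · exact absurd h hw
    · exact sub_eq_zero.mp h
  have quad : ∀ w : K, w ≠ 0 → w ≠ 1 → w ^ 2 + w + 1 = 0 := by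
    intro w hw0 hw1
    have h3' := cube w hw0
    have : (w - 1) * (w ^ 2 + w + 1) = 0 := by linear_combination h3'
    rcases hdom _ _ this with h | h
    · exact absurd (sub_eq_zero.mp h) hw1
    · exact h
  have hx := quad x hx0 hx1
  have hy := quad y hy0 hy1
  have hz := quad z hz0 hz1
  have hzx : (z - x) * (z - x ^ 2) = 0 := by
    linear_combination hz - z * hx + cube x hx0
  have hzy : (z - y) * (z - y ^ 2) = 0 := by
    linear_combination hz - z * hy + cube y hy0
  have hzx' : z = x := by
    rcases hdom _ _ hzx with h | h
    · exact sub_eq_zero.mp h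
    · exact absurd (sub_eq_zero.mp h) h1
  have hzy' : z = y := by
    rcases hdom _ _ hzy with h | h
    · exact sub_eq_zero.mp h
    · exact absurd (sub_eq_zero.mp h) h2
  exact h3 (by rw [← hzx', ← hzy']; linear_combination -(hK4 z))

section Counting
open UniqueFactorizationMonoid
open scoped Classical

variable {R : Type*} [CommRing R] [IsDomain R] [UniqueFactorizationMonoid R]
  [NormalizationMonoid R]

noncomputable def facCount (pr : R → Prop) (b : R) : ℕ :=
  Multiset.card ((normalizedFactors b).filter pr)

lemma facCount_mul (pr : R → Prop) {x y : R} (hx : x ≠ 0) (hy : y ≠ 0) :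
    facCount pr (x * y) = facCount pr x + facCount pr y := by
  simp [facCount, normalizedFactors_mul hx hy, Multiset.filter_add]

lemma facCount_unit (pr : R → Prop) {u : R} (hu : IsUnit u) : facCount pr u = 0 := by
  have hu0 : u ≠ 0 := hu.ne_zero
  have h1 : ¬ (0 < normalizedFactors u) := fun h =>
    ((normalizedFactors_pos u hu0).mp h) hu
  have h2 : normalizedFactors u = 0 := by
    by_contra h
    exact h1 (pos_iff_ne_zero.mpr h)
  simp [facCount, h2]

lemma list_sum_ones : ∀ l : List ℕ, (∀ x ∈ l, x = 1) → l.sum = l.length := by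
  intro l
  induction l with
  | nil => simp
  | cons a t ih =>
    intro h
    simp only [List.sum_cons, List.length_cons, h a (by simp)]
    rw [ih (fun x hx => h x (by simp [hx]))]
    omega

lemma facCount_list (pr : R → Prop) : ∀ L : List R, (∀ b ∈ L, b ≠ 0) →
    facCount pr L.prod = (L.map (facCount pr)).sum := by
  intro L
  induction L with
  | nil => intro _; simpa using facCount_unit pr isUnit_one
  | cons a t ih =>
    intro h
    have ha : a ≠ 0 := h a (by simp)
    have ht : ∀ b ∈ t, b ≠ 0 := fun b hb => h b (by simp [hb])
    have htp : t.prod ≠ 0 := List.prod_ne_zero (fun h0 => ht 0 h0 rfl)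
    simp only [List.prod_cons, List.map_cons, List.sum_cons]
    rw [facCount_mul pr ha htp, ih ht]

-- extraction of two elements satisfying the predicate
lemma extract_two {pr : R → Prop} {b : R}
    (h2 : 2 ≤ facCount pr b) :
    ∃ p q s, normalizedFactors b = p ::ₘ q ::ₘ s ∧ pr p ∧ pr q ∧
      p ∈ normalizedFactors b ∧ q ∈ normalizedFactors b := by
  simp only [facCount] at h2
  set P := normalizedFactors b
  set F := P.filter pr with hF
  have hFne : F ≠ 0 := by
    intro h; rw [h] at h2; simp at h2
  obtain ⟨p, hpF⟩ := Multiset.exists_mem_of_ne_zero hFne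
  have hFe : F.erase p ≠ 0 := by
    intro h
    have := Multiset.card_erase_of_mem hpF
    rw [h] at this
    simp at this
    omega
  obtain ⟨q, hqFe⟩ := Multiset.exists_mem_of_ne_zero hFe
  have hpP : p ∈ P := (Multiset.mem_filter.mp hpF).1
  have hqF : q ∈ F := Multiset.mem_of_le (Multiset.erase_le _ _) hqFe
  have hqPe : q ∈ P.erase p :=
    Multiset.mem_of_le (Multiset.erase_le_erase p (Multiset.filter_le _ _)) hqFe
  refine ⟨p, q, (P.erase p).erase q, ?_, (Multiset.mem_filter.mp hpF).2,
    (Multiset.mem_filter.mp hqF).2, hpP, Multiset.mem_of_le (Multiset.erase_le _ _) hqPe⟩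
  rw [Multiset.cons_erase hqPe, Multiset.cons_erase hpP]

end Counting

section Atoms
open UniqueFactorizationMonoid
open scoped Classical

set_option linter.unusedSectionVars false

variable {R : Type*} [CommRing R] [IsDomain R] [UniqueFactorizationMonoid R]
  [NormalizationMonoid R] {I : Ideal R}

noncomputable def nuI (I : Ideal R) (b : R) : ℕ := facCount (· ∈ I) b

noncomputable def muI (I : Ideal R) (b : R) : ℕ :=
  facCount (fun p => Ideal.Quotient.mk I p ≠ 0 ∧ Ideal.Quotient.mk I p ≠ 1) b

lemma prodπ_ne_zero (hdom : ∀ x y : R ⧸ I, x * y = 0 → x = 0 ∨ y = 0)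
    (hnt : (0 : R ⧸ I) ≠ 1) (s : Multiset R)
    (h : ∀ p ∈ s, Ideal.Quotient.mk I p ≠ 0) : Ideal.Quotient.mk I s.prod ≠ 0 := by
  induction s using Multiset.induction_on with
  | empty => simpa using fun h0 => hnt h0.symm
  | cons a t ih =>
    rw [Multiset.prod_cons, map_mul]
    intro h0
    rcases hdom _ _ h0 with h1 | h1
    · exact h a (by simp) h1
    · exact ih (fun p hp => h p (by simp [hp])) h1

lemma unitπ_ne_zero (hnt : (0 : R ⧸ I) ≠ 1) (v : Rˣ) :
    Ideal.Quotient.mk I (v : R) ≠ 0 := by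
  intro h0
  apply hnt
  have : Ideal.Quotient.mk I ((v : R) * ((v⁻¹ : Rˣ) : R)) = 1 := by
    rw [Units.mul_inv, map_one]
  rw [map_mul, h0, zero_mul] at this
  exact this

lemma atom_res_zero (hI : I.IsPrime) {b : R} (hb : IsTauAtom I b)
    (h0 : Ideal.Quotient.mk I b = 0) : nuI I b = 1 := by
  obtain ⟨hb0, hbu, hbatom⟩ := hb
  obtain ⟨v, hv⟩ := prod_normalizedFactors hb0
  have hbI : b ∈ I := (Ideal.Quotient.eq_zero_iff_mem).mp h0
  have hPmem : (normalizedFactors b).prod ∈ I := by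
    have : (normalizedFactors b).prod = b * ((v⁻¹ : Rˣ) : R) := by
      calc (normalizedFactors b).prod
          = (normalizedFactors b).prod * ((v : R) * ((v⁻¹ : Rˣ) : R)) := by
            rw [Units.mul_inv, mul_one]
        _ = b * ((v⁻¹ : Rˣ) : R) := by rw [← mul_assoc, hv]
    rw [this]
    exact Ideal.mul_mem_right _ _ hbI
  obtain ⟨p, hpP, hpI⟩ := (hI.multiset_prod_mem_iff_exists_mem _).mp hPmem
  have hge : 1 ≤ nuI I b := by
    rw [Nat.one_le_iff_ne_zero]
    intro hc
    simp only [nuI, facCount, Multiset.card_eq_zero, Multiset.filter_eq_nil] at hc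
    exact hc p hpP hpI
  have hle : nuI I b ≤ 1 := by
    by_contra hlt
    have h2 : 2 ≤ facCount (· ∈ I) b := by
      simp only [nuI] at hlt; omega
    obtain ⟨p', q', s, hP, hp'I, hq'I, _, _⟩ := extract_two h2
    have h1 : b = (normalizedFactors b).prod * (v : R) := hv.symm
    rw [hP] at h1
    simp only [Multiset.prod_cons] at h1
    have hbeq : b = 1 * ((p' * s.prod * (v : R)) * q') := by rw [h1]; ring
    have hcI : p' * s.prod * (v : R) ∈ I := by
      exact Ideal.mul_mem_right _ _ (Ideal.mul_mem_right _ _ hp'I)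
    exact atom_no_pair ⟨hb0, hbu, hbatom⟩ isUnit_one hbeq
      (by rw [Ideal.Quotient.eq_zero_iff_mem.mpr hcI, Ideal.Quotient.eq_zero_iff_mem.mpr hq'I])
  omega

end Atoms

section Atoms2
open UniqueFactorizationMonoid
open scoped Classical

set_option linter.unusedSectionVars false

variable {R : Type*} [CommRing R] [IsDomain R] [UniqueFactorizationMonoid R]
  [NormalizationMonoid R] {I : Ideal R}

lemma cancelπ (hdom : ∀ x y : R ⧸ I, x * y = 0 → x = 0 ∨ y = 0)
    {a b c : R ⧸ I} (hc : c ≠ 0) (h : a * c = b * c) : a = b := by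
  have : (a - b) * c = 0 := by linear_combination h
  rcases hdom _ _ this with h1 | h1
  · exact sub_eq_zero.mp h1
  · exact absurd h1 hc

lemma atom_res_ne_zero (hdom : ∀ x y : R ⧸ I, x * y = 0 → x = 0 ∨ y = 0)
    (hnt : (0 : R ⧸ I) ≠ 1) (hK4 : ∀ x : R ⧸ I, x ^ 4 = x)
    {b : R} (hb : IsTauAtom I b) (h0 : Ideal.Quotient.mk I b ≠ 0) :
    nuI I b = 0 ∧ muI I b = 1 := by
  obtain ⟨hb0, hbu, hbatom⟩ := hb
  have hfac0 : ∀ p ∈ normalizedFactors b, Ideal.Quotient.mk I p ≠ 0 := by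
    intro p hp hp0
    apply h0
    obtain ⟨c, hc⟩ := dvd_of_mem_normalizedFactors hp
    rw [hc, map_mul, hp0, zero_mul]
  have hnu : nuI I b = 0 := by
    simp only [nuI, facCount]
    rw [Multiset.card_eq_zero, Multiset.filter_eq_nil]
    intro p hp hpI
    exact hfac0 p hp ((Ideal.Quotient.eq_zero_iff_mem).mpr hpI)
  have hres1 : Ideal.Quotient.mk I b ≠ 1 := by
    intro h1
    exact atom_no_pair ⟨hb0, hbu, hbatom⟩ isUnit_one
      (show b = 1 * (b * 1) by ring) (show Ideal.Quotient.mk I b = Ideal.Quotient.mk I 1 by rw [map_one]; exact h1)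
  obtain ⟨v, hv⟩ := prod_normalizedFactors hb0
  have hvne : Ideal.Quotient.mk I (v : R) ≠ 0 := unitπ_ne_zero hnt v
  have hv3 : (Ideal.Quotient.mk I (v : R)) ^ 3 = 1 := by
    have h4 := hK4 (Ideal.Quotient.mk I (v : R))
    have : Ideal.Quotient.mk I (v : R) * ((Ideal.Quotient.mk I (v : R)) ^ 3 - 1) = 0 := by linear_combination h4
    rcases hdom _ _ this with h | h
    · exact absurd h hvne
    · exact sub_eq_zero.mp h
  -- at least one prime factor has residue ≠ 1
  have hex : ∃ p ∈ normalizedFactors b, Ideal.Quotient.mk I p ≠ 1 := by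
    by_contra hall
    push_neg at hall
    have hπprod : Ideal.Quotient.mk I (normalizedFactors b).prod = 1 := by
      rw [map_multiset_prod]
      refine Multiset.prod_eq_one ?_
      intro x hx
      obtain ⟨p, hp, rfl⟩ := Multiset.mem_map.mp hx
      exact hall p hp
    have hπb : Ideal.Quotient.mk I b = Ideal.Quotient.mk I (v : R) := by
      rw [← hv, map_mul, hπprod, one_mul]
    have hvinv : Ideal.Quotient.mk I ((v⁻¹ : Rˣ) : R) = (Ideal.Quotient.mk I (v : R)) ^ 2 := by
      have h1 : Ideal.Quotient.mk I ((v⁻¹ : Rˣ) : R) * Ideal.Quotient.mk I (v : R) = 1 := by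
        rw [← map_mul, Units.inv_mul, map_one]
      linear_combination (Ideal.Quotient.mk I (v:R))^2 * h1 - Ideal.Quotient.mk I ((v⁻¹ : Rˣ) : R) * hv3
    have hbeq : b = 1 * ((((v⁻¹ : Rˣ) : R) ^ 2 * b) * ((v : R)) ^ 2) := by
      have hinv : ((v⁻¹ : Rˣ) : R) * (v : R) = 1 := Units.inv_mul _
      linear_combination (-(b * (((v⁻¹ : Rˣ) : R) * (v : R) + 1))) * hinv
    refine atom_no_pair ⟨hb0, hbu, hbatom⟩ isUnit_one hbeq ?_
    rw [map_mul, map_pow, map_pow, hvinv, hπb]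
    linear_combination (Ideal.Quotient.mk I (v:R))^2 * hv3
  -- μ ≥ 1
  obtain ⟨p₁, hp₁, hp₁ne⟩ := hex
  have hge : 1 ≤ muI I b := by
    rw [Nat.one_le_iff_ne_zero]
    intro hc
    simp only [muI, facCount, Multiset.card_eq_zero, Multiset.filter_eq_nil] at hc
    exact hc p₁ hp₁ ⟨hfac0 p₁ hp₁, hp₁ne⟩
  -- μ ≤ 1
  have hle : muI I b ≤ 1 := by
    by_contra hlt
    have h2 : 2 ≤ facCount
        (fun p => Ideal.Quotient.mk I p ≠ 0 ∧ Ideal.Quotient.mk I p ≠ 1) b := by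
      simp only [muI] at hlt; omega
    obtain ⟨p, q, s, hP, hpp, hqp, hpP, hqP⟩ := extract_two h2
    have h1 : b = p * (q * s.prod) * (v : R) := by
      rw [← hv, hP]; simp [Multiset.prod_cons]
    have hsmem : ∀ r ∈ s, r ∈ normalizedFactors b := by
      intro r hr; rw [hP]; simp [hr]
    have hs0 : Ideal.Quotient.mk I s.prod ≠ 0 := prodπ_ne_zero hdom hnt s
      (fun r hr => hfac0 r (hsmem r hr))
    set x := Ideal.Quotient.mk I p with hx
    set y := Ideal.Quotient.mk I q with hy
    set z := Ideal.Quotient.mk I b with hz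
    have hzeq : z = (Ideal.Quotient.mk I (v : R) * Ideal.Quotient.mk I s.prod) * (x * y) := by
      rw [hz, h1, map_mul, map_mul, map_mul]; ring
    have hA0 : Ideal.Quotient.mk I (v : R) * Ideal.Quotient.mk I s.prod ≠ 0 := by
      intro h; rcases hdom _ _ h with h | h
      · exact hvne h
      · exact hs0 h
    have hne1 : z ≠ y ^ 2 := by
      intro hzy
      refine atom_no_pair ⟨hb0, hbu, hbatom⟩ isUnit_one
        (show b = 1 * (((v : R) * p * s.prod) * q) by rw [h1]; ring) ?_
      have hcval : Ideal.Quotient.mk I ((v : R) * p * s.prod) = Ideal.Quotient.mk I (v : R) * Ideal.Quotient.mk I s.prod * x := by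
        rw [map_mul, map_mul]; ring
      rw [hcval]
      refine cancelπ hdom hqp.1 ?_
      rw [← hy]
      calc (Ideal.Quotient.mk I (v:R) * Ideal.Quotient.mk I s.prod * x) * y = z := by rw [hzeq]; ring
        _ = y * y := by rw [hzy]; ring
    have hne2 : z ≠ x ^ 2 := by
      intro hzx
      refine atom_no_pair ⟨hb0, hbu, hbatom⟩ isUnit_one
        (show b = 1 * (((v : R) * q * s.prod) * p) by rw [h1]; ring) ?_
      have hcval : Ideal.Quotient.mk I ((v : R) * q * s.prod) = Ideal.Quotient.mk I (v : R) * Ideal.Quotient.mk I s.prod * y := by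
        rw [map_mul, map_mul]; ring
      rw [hcval]
      refine cancelπ hdom hpp.1 ?_
      rw [← hx]
      calc (Ideal.Quotient.mk I (v:R) * Ideal.Quotient.mk I s.prod * y) * x = z := by rw [hzeq]; ring
        _ = x * x := by rw [hzx]; ring
    have hne3 : z ≠ x ^ 2 * y ^ 2 := by
      intro hzxy
      refine atom_no_pair ⟨hb0, hbu, hbatom⟩ isUnit_one
        (show b = 1 * (((v : R) * s.prod) * (p * q)) by rw [h1]; ring) ?_
      have hcval : Ideal.Quotient.mk I ((v : R) * s.prod) = Ideal.Quotient.mk I (v : R) * Ideal.Quotient.mk I s.prod := by rw [map_mul]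
      rw [hcval, map_mul, ← hx, ← hy]
      have hxy0 : x * y ≠ 0 := by
        intro h; rcases hdom _ _ h with h | h
        · exact hpp.1 h
        · exact hqp.1 h
      refine cancelπ hdom hxy0 ?_
      calc (Ideal.Quotient.mk I (v:R) * Ideal.Quotient.mk I s.prod) * (x * y) = z := by rw [hzeq]
        _ = (x * y) * (x * y) := by rw [hzxy]; ring
    exact key3 hdom hK4 hpp.1 hpp.2 hqp.1 hqp.2 h0 hres1 hne2 hne1 hne3
  exact ⟨hnu, by omega⟩

end Atoms2

section Length
open UniqueFactorizationMonoid
open scoped Classical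

set_option linter.unusedSectionVars false

variable {R : Type*} [CommRing R] [IsDomain R] [UniqueFactorizationMonoid R]
  [NormalizationMonoid R] {I : Ideal R}

lemma length_eq (hI : I.IsPrime)
    (hdom : ∀ x y : R ⧸ I, x * y = 0 → x = 0 ∨ y = 0)
    (hnt : (0 : R ⧸ I) ≠ 1) (hK4 : ∀ x : R ⧸ I, x ^ 4 = x)
    {w : R} {L : List R} (h : IsTauAtomicFactorization I w L) :
    L.length = if nuI I w = 0 then muI I w else nuI I w := by
  obtain ⟨⟨hne, ⟨u, hu, hw⟩, hcong⟩, hatoms⟩ := h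
  have hb0 : ∀ b ∈ L, b ≠ 0 := fun b hb => (hatoms b hb).1
  have hprod0 : L.prod ≠ 0 := List.prod_ne_zero (fun h0 => hb0 0 h0 rfl)
  have hnuw : nuI I w = (L.map (nuI I)).sum := by
    rw [hw, show nuI I (u * L.prod) = facCount (· ∈ I) (u * L.prod) from rfl,
      facCount_mul _ hu.ne_zero hprod0, facCount_unit _ hu, zero_add]
    exact facCount_list _ L hb0
  have hmuw : muI I w = (L.map (muI I)).sum := by
    rw [hw, show muI I (u * L.prod) = facCount
        (fun p => Ideal.Quotient.mk I p ≠ 0 ∧ Ideal.Quotient.mk I p ≠ 1) (u * L.prod) from rfl,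
      facCount_mul _ hu.ne_zero hprod0, facCount_unit _ hu, zero_add]
    exact facCount_list _ L hb0
  obtain ⟨b₀, hb₀⟩ : ∃ b₀, b₀ ∈ L := by
    cases L with
    | nil => exact absurd rfl hne
    | cons a t => exact ⟨a, by simp⟩
  by_cases hres : Ideal.Quotient.mk I b₀ = 0
  · have hall : ∀ b ∈ L, nuI I b = 1 := by
      intro b hb
      exact atom_res_zero hI (hatoms b hb) (by rw [hcong b hb b₀ hb₀]; exact hres)
    have hsum : nuI I w = L.length := by
      rw [hnuw]
      have := list_sum_ones (L.map (nuI I)) (by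
        intro x hx
        obtain ⟨b, hb, rfl⟩ := List.mem_map.mp hx
        exact hall b hb)
      rw [this, List.length_map]
    have hlen0 : L.length ≠ 0 := by
      intro h; exact hne (List.length_eq_zero_iff.mp h)
    rw [if_neg (by omega : ¬ nuI I w = 0)]
    omega
  · have hall : ∀ b ∈ L, nuI I b = 0 ∧ muI I b = 1 := by
      intro b hb
      exact atom_res_ne_zero hdom hnt hK4 (hatoms b hb)
        (by rw [hcong b hb b₀ hb₀]; exact hres)
    have hsum : muI I w = L.length := by
      rw [hmuw]
      have := list_sum_ones (L.map (muI I)) (by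
        intro x hx
        obtain ⟨b, hb, rfl⟩ := List.mem_map.mp hx
        exact (hall b hb).2)
      rw [this, List.length_map]
    have hnu0 : nuI I w = 0 := by
      rw [hnuw]
      have : ∀ x ∈ L.map (nuI I), x = 0 := by
        intro x hx
        obtain ⟨b, hb, rfl⟩ := List.mem_map.mp hx
        exact (hall b hb).1
      have h2 : L.map (nuI I) = List.replicate (L.map (nuI I)).length 0 :=
        List.eq_replicate_of_mem this
      rw [h2, List.sum_replicate]
      simp
    rw [if_pos hnu0]
    omega

end Length


/-- UFD `R`, `R/I ≅ 𝔽₄`: every `τ_I`-atomic element has `τ_I`-elasticity `1`, so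
`R` is a `τ_I`-half factorial domain. -/
theorem stmt_13 {R : Type*} [CommRing R] [IsDomain R] [UniqueFactorizationMonoid R]
    (I : Ideal R)
    (f : (R ⧸ I) ≃+* (ℤ[X] ⧸ Ideal.span ({2, X ^ 2 + X + 1} : Set ℤ[X]))) :
    ∀ w : R, IsTauAtomic I w →
      tauElasticity I w = 1 ∧
      ∀ L₁ L₂ : List R, IsTauAtomicFactorization I w L₁ →
        IsTauAtomicFactorization I w L₂ → L₁.length = L₂.length := by
  obtain ⟨φ, hφ⟩ := Qring_facts
  have hψ : Function.Injective (φ.comp (f : R ⧸ I →+* Qring)) := hφ.comp f.injective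
  set ψ := φ.comp (f : R ⧸ I →+* Qring) with hψdef
  have hdom : ∀ x y : R ⧸ I, x * y = 0 → x = 0 ∨ y = 0 := by
    intro x y h
    have : ψ x * ψ y = 0 := by rw [← map_mul, h, map_zero]
    rcases mul_eq_zero.mp this with h' | h'
    · exact Or.inl (hψ (by rw [h', map_zero]))
    · exact Or.inr (hψ (by rw [h', map_zero]))
  have hnt : (0 : R ⧸ I) ≠ 1 := by
    intro h
    have h2 : (0 : Ffour) = 1 := by
      have := congrArg ψ h
      rwa [map_zero, map_one] at this
    exact zero_ne_one h2
  have hK4 : ∀ x : R ⧸ I, x ^ 4 = x := by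
    intro x
    apply hψ
    rw [map_pow]
    exact Ffour_pow4 (ψ x)
  have hI : I.IsPrime := by
    constructor
    · intro htop
      refine hnt ?_
      have h1 : (1:R) ∈ I := (Ideal.eq_top_iff_one I).mp htop
      have h2 := Ideal.Quotient.eq_zero_iff_mem.mpr h1
      rw [map_one] at h2
      exact h2.symm
    · intro a b hab
      have h2 : Ideal.Quotient.mk I a * Ideal.Quotient.mk I b = 0 := by
        rw [← map_mul]; exact Ideal.Quotient.eq_zero_iff_mem.mpr hab
      rcases hdom _ _ h2 with h | h
      · exact Or.inl (Ideal.Quotient.eq_zero_iff_mem.mp h)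
      · exact Or.inr (Ideal.Quotient.eq_zero_iff_mem.mp h)
  letI : NormalizationMonoid R := UniqueFactorizationMonoid.normalizationMonoid.toNormalizationMonoid
  intro w hw
  have hlen : ∀ L : List R, IsTauAtomicFactorization I w L →
      L.length = if nuI I w = 0 then muI I w else nuI I w := by
    intro L hL
    exact length_eq hI hdom hnt hK4 hL
  have heq : ∀ L₁ L₂ : List R, IsTauAtomicFactorization I w L₁ →
      IsTauAtomicFactorization I w L₂ → L₁.length = L₂.length := by
    intro L₁ L₂ h₁ h₂
    rw [hlen _ h₁, hlen _ h₂]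
  refine ⟨?_, heq⟩
  obtain ⟨L, hL⟩ := hw
  have hlenL : L.length ≠ 0 := fun h => hL.1.1 (List.length_eq_zero_iff.mp h)
  apply le_antisymm
  · apply sSup_le
    rintro r ⟨L₁, L₂, h₁, h₂, rfl⟩
    rw [heq L₁ L₂ h₁ h₂]
    have h2 : L₂.length ≠ 0 := fun h => h₂.1.1 (List.length_eq_zero_iff.mp h)
    rw [ENNReal.div_self (by exact_mod_cast h2) (ENNReal.natCast_ne_top _)]
  · apply le_sSup
    exact ⟨L, L, hL, hL, by
      rw [ENNReal.div_self (by exact_mod_cast hlenL) (ENNReal.natCast_ne_top _)]⟩
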